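/- arXiv:2401.11573 — 2 statements merged into one kernel-verified Lean document; each statement's English description precedes it below -/
import Mathlib

section
/- Let C ⊆ ℝ^{n×p} be a δ-proximally smooth closed set, i.e., the metric projection Proj_C(X) is a singleton whenever dist(X, C) < δ. Then for any γ ∈ (0, δ) and any X, Y with dist(X, C) < γ and dist(Y, C) < γ, ‖Proj_C(X) - Proj_C(Y)‖_F ≤ (δ/(δ - γ))·‖X - Y‖_F. -/
open Metric Set Filter Topology

section Aux
variable {E : Type*} [NormedAddCommGroup E] [InnerProductSpace ℝ E] [FiniteDimensional ℝ E]

/-- The metric projection is continuous at every point of the open `δ`-tube. -/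
lemma projContinuousAt (C : Set E) (hC : IsClosed C) (δ : ℝ)
    (proj : E → E)
    (hproj : ∀ X, Metric.infDist X C < δ → proj X ∈ C ∧ ‖X - proj X‖ = Metric.infDist X C)
    (huniq : ∀ X, Metric.infDist X C < δ → ∀ Y ∈ C, ‖X - Y‖ = Metric.infDist X C → Y = proj X)
    {z : E} (hz : Metric.infDist z C < δ) : ContinuousAt proj z := by
  have hopen : IsOpen {w : E | Metric.infDist w C < δ} :=
    isOpen_lt (Metric.continuous_infDist_pt C) continuous_const
  obtain ⟨ρ, hρ0, hρ⟩ := Metric.isOpen_iff.mp hopen z hz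
  rw [Metric.continuousAt_iff]
  intro ε hε
  by_contra hcon
  push_neg at hcon
  -- hcon : ∀ η > 0, ∃ w, dist w z < η ∧ ε ≤ dist (proj w) (proj z)
  have hsel : ∀ k : ℕ, ∃ w, dist w z < min ρ (1 / (k + 1)) ∧ ε ≤ dist (proj w) (proj z) := by
    intro k
    exact hcon _ (lt_min hρ0 (by positivity))
  choose w hw1 hw2 using hsel
  have hwδ : ∀ k, Metric.infDist (w k) C < δ := fun k =>
    hρ (Metric.mem_ball.mpr ((hw1 k).trans_le (min_le_left _ _)))
  have hwz : Tendsto w atTop (𝓝 z) := by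
    rw [tendsto_iff_dist_tendsto_zero]
    apply squeeze_zero (fun k => dist_nonneg)
      (fun k => ((hw1 k).trans_le (min_le_right _ _)).le)
    exact tendsto_one_div_add_atTop_nhds_zero_nat
  set c : ℕ → E := fun k => proj (w k) with hc
  have hcK : ∀ k, c k ∈ C ∩ Metric.closedBall z (δ + ρ) := by
    intro k
    refine ⟨(hproj _ (hwδ k)).1, Metric.mem_closedBall.mpr ?_⟩
    have h1 : dist (c k) (w k) = Metric.infDist (w k) C := by
      rw [dist_comm, dist_eq_norm]; exact (hproj _ (hwδ k)).2
    have h2 := dist_triangle (c k) (w k) z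
    have h3 : dist (w k) z < ρ := (hw1 k).trans_le (min_le_left _ _)
    have := (hwδ k).le
    linarith
  have hK : IsCompact (C ∩ Metric.closedBall z (δ + ρ)) :=
    (isCompact_closedBall z (δ + ρ)).inter_left hC
  obtain ⟨a, haK, φ, hφ, hconv⟩ := hK.tendsto_subseq hcK
  have hwφ : Tendsto (w ∘ φ) atTop (𝓝 z) := hwz.comp hφ.tendsto_atTop
  -- dist z a = infDist z C
  have hda : dist z a = Metric.infDist z C := by
    have h1 : Tendsto (fun k => dist ((w ∘ φ) k) ((c ∘ φ) k)) atTop (𝓝 (dist z a)) :=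
      hwφ.dist hconv
    have h2 : ∀ k, dist ((w ∘ φ) k) ((c ∘ φ) k) = Metric.infDist ((w ∘ φ) k) C := by
      intro k; rw [dist_eq_norm]; exact (hproj _ (hwδ (φ k))).2
    have h3 : Tendsto (fun k => Metric.infDist ((w ∘ φ) k) C) atTop
        (𝓝 (Metric.infDist z C)) :=
      ((Metric.continuous_infDist_pt C).tendsto z).comp hwφ
    rw [funext h2] at h1
    exact tendsto_nhds_unique h1 h3
  have haz : a = proj z := by
    refine huniq z hz a haK.1 ?_
    rw [← dist_eq_norm]; exact hda
  rw [haz] at hconv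
  have : Tendsto (fun k => dist ((c ∘ φ) k) (proj z)) atTop (𝓝 0) := by
    simpa using hconv.dist (tendsto_const_nhds (x := proj z))
  have hev := this.eventually (eventually_lt_nhds (show (0:ℝ) < ε from hε))
  obtain ⟨k, hk⟩ := hev.exists
  exact absurd (hw2 (φ k)) (not_le.mpr hk)


set_option maxHeartbeats 2000000 in
lemma normal_ineq (C : Set E) (hC : IsClosed C) (hCne : C.Nonempty) (δ : ℝ) (hδ : 0 < δ)
    (proj : E → E)
    (hproj : ∀ X, Metric.infDist X C < δ → proj X ∈ C ∧ ‖X - proj X‖ = Metric.infDist X C)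
    (huniq : ∀ X, Metric.infDist X C < δ → ∀ Y ∈ C, ‖X - Y‖ = Metric.infDist X C → Y = proj X)
    (X : E) (hX : Metric.infDist X C < δ) (c : E) (hc : c ∈ C) :
    2 * δ * (inner ℝ (X - proj X) (c - proj X) : ℝ) ≤ Metric.infDist X C * ‖c - proj X‖ ^ 2 := by
  obtain ⟨hpC, hpX⟩ := hproj X hX
  set d := Metric.infDist X C with hd
  set P := proj X with hP
  have hd0 : 0 ≤ d := Metric.infDist_nonneg
  rcases eq_or_lt_of_le hd0 with h0 | hdpos
  · have hXP : X - P = 0 := by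
      have : ‖X - P‖ = 0 := by rw [hpX, ← h0]
      simpa using this
    rw [hXP]
    simp only [inner_zero_left, mul_zero]
    exact mul_nonneg hd0 (sq_nonneg _)
  · set u := d⁻¹ • (X - P) with hu
    have hXu : X - P = d • u := by
      rw [hu, smul_smul, mul_inv_cancel₀ (ne_of_gt hdpos), one_smul]
    have hunorm : ‖u‖ = 1 := by
      rw [hu, norm_smul, Real.norm_eq_abs, abs_of_pos (inv_pos.mpr hdpos), hpX,
        inv_mul_cancel₀ (ne_of_gt hdpos)]
    have key : ∀ t, d < t → t < δ → 2 * t * (inner ℝ u (c - P) : ℝ) ≤ ‖c - P‖ ^ 2 := by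
      intro t hdt htδ
      have hT0 : 0 < t - d := by linarith
      set T := t - d with hTdef
      set M : ℝ → ℝ := fun ε => ε * (2 * T ^ 2) + ε * (2 - ε) * (T ^ 3 / d) with hM
      have con : ∀ ε, 0 < ε → ε ≤ 1 / 2 →
          ∃ Z : E, dist Z X ≤ T ∧ d + (1 - ε) * T ≤ Metric.infDist Z C := by
        intro ε hε1 hε2
        set δ' := (δ + t) / 2 with hδ'p
        have htδ' : t ≤ δ' := by rw [hδ'p]; linarith
        have hδ'δ : δ' < δ := by rw [hδ'p]; linarith
        set A : Set E := Metric.closedBall X (4 * δ) ∩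
            {z | d / 2 ≤ Metric.infDist z C ∧ Metric.infDist z C ≤ δ'} with hAdef
        have hAcomp : IsCompact A := by
          apply (isCompact_closedBall X (4 * δ)).inter_right
          have h1 : IsClosed {z : E | d / 2 ≤ Metric.infDist z C} :=
            isClosed_le continuous_const (Metric.continuous_infDist_pt C)
          have h2 : IsClosed {z : E | Metric.infDist z C ≤ δ'} :=
            isClosed_le (Metric.continuous_infDist_pt C) continuous_const
          exact h1.inter h2
        have hAtube : ∀ z ∈ A, Metric.infDist z C < δ := fun z hz =>
          lt_of_le_of_lt hz.2.2 hδ'δ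
        have hcontA : ContinuousOn proj A := fun z hz =>
          (projContinuousAt C hC δ proj hproj huniq (hAtube z hz)).continuousWithinAt
        obtain ⟨η₀, hη₀, hucm⟩ := Metric.uniformContinuousOn_iff.mp
          (hAcomp.uniformContinuousOn_of_continuous hcontA) (ε * d / 8) (by positivity)
        set η := min (η₀ / 2) (min (d / 4) (ε * d / 8)) with hηdef
        have hηpos : 0 < η := by
          apply lt_min (by positivity) (lt_min (by positivity) (by positivity))
        have hηa : η ≤ η₀ / 2 := min_le_left _ _
        have hηb : η ≤ d / 4 := le_trans (min_le_right _ _) (min_le_left _ _)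
        have hηc : η ≤ ε * d / 8 := le_trans (min_le_right _ _) (min_le_right _ _)
        set N := Nat.ceil (T / η) + 1 with hNdef
        have hN0 : (0:ℝ) < (N:ℝ) := by
          have : 0 < N := Nat.succ_pos _
          exact_mod_cast this
        set h := T / N with hhdef
        have hh0 : 0 < h := div_pos hT0 hN0
        have hhη : h ≤ η := by
          have h1 : T / η ≤ (N:ℝ) := by
            refine le_trans (Nat.le_ceil _) ?_
            exact_mod_cast Nat.le_succ _
          rw [hhdef, div_le_iff₀ hN0]
          calc T = (T / η) * η := by field_simp
            _ ≤ (N:ℝ) * η := mul_le_mul_of_nonneg_right h1 hηpos.le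
            _ = η * N := mul_comm _ _
        have hNh : (N:ℝ) * h = T := by rw [hhdef]; field_simp
        set uu : E → E := fun w => (Metric.infDist w C)⁻¹ • (w - proj w) with huudef
        have huueq : ∀ w, uu w = (Metric.infDist w C)⁻¹ • (w - proj w) := fun w => rfl
        have huun : ∀ w, 0 < Metric.infDist w C → Metric.infDist w C < δ → ‖uu w‖ = 1 := by
          intro w h1 h2
          rw [huueq, norm_smul, Real.norm_eq_abs, abs_of_pos (inv_pos.mpr h1),
            (hproj w h2).2, inv_mul_cancel₀ (ne_of_gt h1)]
        have hudiff : ∀ z ∈ A, ∀ w ∈ A, dist z w ≤ η → ‖uu w - uu z‖ ≤ ε := by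
          intro z hz w hw hzw
          have hdzδ : Metric.infDist z C < δ := hAtube z hz
          have hdwδ : Metric.infDist w C < δ := hAtube w hw
          have hdz1 : d / 2 ≤ Metric.infDist z C := hz.2.1
          have hdw1 : d / 2 ≤ Metric.infDist w C := hw.2.1
          have hdz0 : 0 < Metric.infDist z C := lt_of_lt_of_le (by positivity) hdz1
          have hdw0 : 0 < Metric.infDist w C := lt_of_lt_of_le (by positivity) hdw1
          have hprojzw : dist (proj z) (proj w) < ε * d / 8 :=
            hucm z hz w hw (lt_of_le_of_lt hzw (by linarith))
          have hnm : uu w - uu z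
              = (Metric.infDist w C)⁻¹ • ((w - proj w) - (z - proj z))
                + ((Metric.infDist w C)⁻¹ - (Metric.infDist z C)⁻¹) • (z - proj z) := by
            rw [huueq, huueq]
            module
          have hn1 : ‖(w - proj w) - (z - proj z)‖ ≤ dist z w + dist (proj z) (proj w) := by
            have e : (w - proj w) - (z - proj z) = (w - z) + (proj z - proj w) := by abel
            rw [e]
            calc ‖(w - z) + (proj z - proj w)‖ ≤ ‖w - z‖ + ‖proj z - proj w‖ := norm_add_le _ _
              _ = dist z w + dist (proj z) (proj w) := by
                  rw [← dist_eq_norm, ← dist_eq_norm, dist_comm w z]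
          have hlip : |Metric.infDist z C - Metric.infDist w C| ≤ dist z w := by
            rw [abs_sub_le_iff]
            constructor
            · have := Metric.infDist_le_infDist_add_dist (x := z) (y := w) (s := C)
              linarith
            · have := Metric.infDist_le_infDist_add_dist (x := w) (y := z) (s := C)
              rw [dist_comm] at this
              linarith
          have hinv2d : (Metric.infDist w C)⁻¹ ≤ 2 / d := by
            rw [show (2:ℝ) / d = (d / 2)⁻¹ by rw [inv_div]]
            exact inv_anti₀ (by positivity) hdw1
          have e5 : |(Metric.infDist w C)⁻¹ - (Metric.infDist z C)⁻¹| * Metric.infDist z C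
              = |Metric.infDist z C - Metric.infDist w C| / Metric.infDist w C := by
            have heq : (Metric.infDist w C)⁻¹ - (Metric.infDist z C)⁻¹
                = (Metric.infDist z C - Metric.infDist w C)
                  / (Metric.infDist z C * Metric.infDist w C) := by
              field_simp
            have hdz' : Metric.infDist z C ≠ 0 := ne_of_gt hdz0
            have hdw' : Metric.infDist w C ≠ 0 := ne_of_gt hdw0
            rw [heq, abs_div, abs_of_pos (mul_pos hdz0 hdw0)]
            field_simp
          have hinvd : |(Metric.infDist w C)⁻¹ - (Metric.infDist z C)⁻¹| * Metric.infDist z C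
              ≤ (2 / d) * dist z w := by
            rw [e5]
            calc |Metric.infDist z C - Metric.infDist w C| / Metric.infDist w C
                ≤ dist z w / (d / 2) := by
                  apply div_le_div₀ dist_nonneg hlip (by positivity) hdw1
              _ = (2 / d) * dist z w := by
                  rw [div_div_eq_mul_div]
                  ring
          calc ‖uu w - uu z‖
              ≤ ‖(Metric.infDist w C)⁻¹ • ((w - proj w) - (z - proj z))‖
                + ‖((Metric.infDist w C)⁻¹ - (Metric.infDist z C)⁻¹) • (z - proj z)‖ := by
                rw [hnm]; exact norm_add_le _ _
            _ = (Metric.infDist w C)⁻¹ * ‖(w - proj w) - (z - proj z)‖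
                + |(Metric.infDist w C)⁻¹ - (Metric.infDist z C)⁻¹| * Metric.infDist z C := by
                rw [norm_smul, norm_smul, Real.norm_eq_abs, Real.norm_eq_abs,
                  abs_of_pos (inv_pos.mpr hdw0), (hproj z hdzδ).2]
            _ ≤ (2 / d) * (dist z w + dist (proj z) (proj w)) + (2 / d) * dist z w := by
                refine add_le_add ?_ hinvd
                apply mul_le_mul hinv2d hn1 (norm_nonneg _) (by positivity)
            _ ≤ (2 / d) * (ε * d / 8 + ε * d / 8) + (2 / d) * (ε * d / 8) := by
                have hzwb : dist z w ≤ ε * d / 8 := le_trans hzw hηc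
                refine add_le_add ?_ ?_
                · apply mul_le_mul_of_nonneg_left _ (by positivity)
                  exact add_le_add hzwb hprojzw.le
                · exact mul_le_mul_of_nonneg_left hzwb (by positivity)
            _ ≤ ε := by
                have e6 : (2 / d) * (ε * d / 8 + ε * d / 8) + (2 / d) * (ε * d / 8)
                    = 3 * ε / 4 := by
                  field_simp
                  ring
                rw [e6]; linarith
        set zseq : ℕ → E := fun k => (fun w => w + h • uu w)^[k] X with hzseqdef
        have hz0 : zseq 0 = X := rfl
        have hzsucc : ∀ k, zseq (k+1) = zseq k + h • uu (zseq k) := fun k =>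
          Function.iterate_succ_apply' _ _ _
        have main : ∀ k, k ≤ N →
            dist (zseq k) X ≤ (k:ℝ) * h ∧
            d + (1 - ε) * ((k:ℝ) * h) ≤ Metric.infDist (zseq k) C := by
          intro k
          induction k with
          | zero =>
            intro _
            constructor
            · simp [hz0]
            · rw [hz0]
              push_cast
              simp [hd]
          | succ k ih =>
            intro hk1
            obtain ⟨ih1, ih2⟩ := ih (Nat.le_of_succ_le hk1)
            have hkh : (k:ℝ) * h + h ≤ T := by
              have hcast : ((k:ℝ) + 1) ≤ (N:ℝ) := by exact_mod_cast hk1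
              calc (k:ℝ) * h + h = ((k:ℝ) + 1) * h := by ring
                _ ≤ (N:ℝ) * h := mul_le_mul_of_nonneg_right hcast hh0.le
                _ = T := hNh
            have hkh0 : (0:ℝ) ≤ (k:ℝ) * h := by positivity
            have h1ε : (0:ℝ) ≤ 1 - ε := by linarith
            have hdk_lb : d ≤ Metric.infDist (zseq k) C := by
              have := mul_nonneg h1ε hkh0
              linarith
            have hdk_ub : Metric.infDist (zseq k) C ≤ d + (k:ℝ) * h := by
              have h0 := Metric.infDist_le_infDist_add_dist (x := zseq k) (y := X) (s := C)
              have hdX : Metric.infDist X C = d := rfl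
              rw [hdX] at h0
              linarith
            have hdk0 : 0 < Metric.infDist (zseq k) C := lt_of_lt_of_le hdpos hdk_lb
            have hdkδ : Metric.infDist (zseq k) C < δ := by
              have : d + (k:ℝ) * h ≤ d + T := by linarith
              have ht' : d + T = t := by rw [hTdef]; ring
              linarith
            have hTδ : T ≤ 4 * δ := by linarith
            have hzkA : zseq k ∈ A := by
              refine ⟨Metric.mem_closedBall.mpr ?_, ?_, ?_⟩
              · calc dist (zseq k) X ≤ (k:ℝ) * h := ih1
                  _ ≤ T := by linarith
                  _ ≤ 4 * δ := hTδ
              · linarith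
              · have ht' : d + T = t := by rw [hTdef]; ring
                calc Metric.infDist (zseq k) C ≤ d + (k:ℝ) * h := hdk_ub
                  _ ≤ δ' := by linarith
            have hwz : dist (zseq (k+1)) (zseq k) = h := by
              rw [hzsucc k, dist_eq_norm]
              have e : zseq k + h • uu (zseq k) - zseq k = h • uu (zseq k) := by abel
              rw [e, norm_smul, Real.norm_eq_abs, abs_of_pos hh0, huun _ hdk0 hdkδ, mul_one]
            have hdw_lb2 : Metric.infDist (zseq k) C - h ≤ Metric.infDist (zseq (k+1)) C := by
              have h0 := Metric.infDist_le_infDist_add_dist (x := zseq k) (y := zseq (k+1)) (s := C)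
              rw [dist_comm] at h0
              rw [hwz] at h0
              linarith
            have hhd4 : h ≤ d / 4 := le_trans hhη hηb
            have hdw0 : 0 < Metric.infDist (zseq (k+1)) C := by linarith
            have hdw_ub : Metric.infDist (zseq (k+1)) C ≤ d + ((k:ℝ) + 1) * h := by
              have h0 := Metric.infDist_le_infDist_add_dist (x := zseq (k+1)) (y := X) (s := C)
              have hdX : Metric.infDist X C = d := rfl
              rw [hdX] at h0
              have htr := dist_triangle (zseq (k+1)) (zseq k) X
              rw [hwz] at htr
              have : dist (zseq (k+1)) X ≤ ((k:ℝ) + 1) * h := by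
                calc dist (zseq (k+1)) X ≤ h + dist (zseq k) X := htr
                  _ ≤ h + (k:ℝ) * h := by linarith
                  _ = ((k:ℝ) + 1) * h := by ring
              linarith
            have hdwδ : Metric.infDist (zseq (k+1)) C < δ := by
              have ht' : d + T = t := by rw [hTdef]; ring
              have : d + ((k:ℝ) + 1) * h ≤ d + T := by linarith
              linarith
            have hwA : zseq (k+1) ∈ A := by
              refine ⟨Metric.mem_closedBall.mpr ?_, ?_, ?_⟩
              · have htr := dist_triangle (zseq (k+1)) (zseq k) X
                rw [hwz] at htr
                calc dist (zseq (k+1)) X ≤ h + dist (zseq k) X := htr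
                  _ ≤ h + (k:ℝ) * h := by linarith
                  _ ≤ T := by linarith
                  _ ≤ 4 * δ := hTδ
              · linarith
              · have ht' : d + T = t := by rw [hTdef]; ring
                calc Metric.infDist (zseq (k+1)) C ≤ d + ((k:ℝ) + 1) * h := hdw_ub
                  _ ≤ δ' := by linarith
            set w := zseq (k+1) with hwdef
            set dw := Metric.infDist w C with hdwdef
            set q := proj w with hqdef
            have hwq : ‖w - q‖ = dw := (hproj w hdwδ).2
            have hqC : q ∈ C := (hproj w hdwδ).1
            set m := w - h • uu w with hmdef
            have hsmul : h • uu w = (h * dw⁻¹) • (w - q) := by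
              rw [huueq, smul_smul]
            have hmq : m - q = (1 - h * dw⁻¹) • (w - q) := by
              rw [sub_smul, one_smul]
              rw [hmdef, hsmul]
              abel
            have hhdw : h ≤ dw := by linarith
            have hmqn : ‖m - q‖ = dw - h := by
              rw [hmq, norm_smul, Real.norm_eq_abs]
              have h1 : (0:ℝ) ≤ 1 - h * dw⁻¹ := by
                rw [sub_nonneg, ← div_eq_mul_inv]
                exact (div_le_one hdw0).mpr hhdw
              rw [abs_of_nonneg h1, hwq]
              field_simp
            have hmd : Metric.infDist m C ≤ dw - h := by
              calc Metric.infDist m C ≤ dist m q := Metric.infDist_le_dist_of_mem hqC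
                _ = dw - h := by rw [dist_eq_norm, hmqn]
            have hzm : dist (zseq k) m ≤ ε * h := by
              have e : m - zseq k = h • (uu (zseq k) - uu w) := by
                rw [hmdef, hwdef, hzsucc k, smul_sub]
                abel
              rw [dist_comm, dist_eq_norm, e, norm_smul, Real.norm_eq_abs, abs_of_pos hh0]
              have hd1 : dist (zseq k) w ≤ η := by
                rw [hwdef, dist_comm]
                rw [hwz]
                exact hhη
              calc h * ‖uu (zseq k) - uu w‖ = h * ‖uu w - uu (zseq k)‖ := by rw [norm_sub_rev]
                _ ≤ h * ε := mul_le_mul_of_nonneg_left (hudiff (zseq k) hzkA w hwA hd1) hh0.le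
                _ = ε * h := mul_comm _ _
            have hgrow := Metric.infDist_le_infDist_add_dist (x := zseq k) (y := m) (s := C)
            have hstep : Metric.infDist (zseq k) C + (1 - ε) * h ≤ dw := by
              have := hgrow
              linarith [hmd, hzm]
            constructor
            · have htr := dist_triangle (zseq (k+1)) (zseq k) X
              rw [hwz] at htr
              push_cast
              calc dist (zseq (k+1)) X ≤ h + dist (zseq k) X := htr
                _ ≤ h + (k:ℝ) * h := by linarith
                _ = ((k:ℝ) + 1) * h := by ring
            · push_cast
              calc d + (1 - ε) * (((k:ℝ) + 1) * h)
                  = (d + (1 - ε) * ((k:ℝ) * h)) + (1 - ε) * h := by ring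
                _ ≤ Metric.infDist (zseq k) C + (1 - ε) * h := by linarith
                _ ≤ dw := hstep
        obtain ⟨hm1, hm2⟩ := main N le_rfl
        refine ⟨zseq N, ?_, ?_⟩
        · rw [← hNh]; exact hm1
        · rw [← hNh]; exact hm2
      set xt := X + T • u with hxt
      have hxtP : xt - P = t • u := by
        have h1 : xt - P = (X - P) + T • u := by rw [hxt]; abel
        rw [h1, hXu, ← add_smul]
        congr 1
        rw [hTdef]; ring
      have hxtnorm : ‖xt - P‖ = t := by
        rw [hxtP, norm_smul, Real.norm_eq_abs, abs_of_pos (by linarith), hunorm, mul_one]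
      have perε : ∀ ε, 0 < ε → ε ≤ 1 / 2 →
          2 * t * (inner ℝ u (c - P) : ℝ) ≤ t ^ 2 + ‖c - P‖ ^ 2 - (d + (1 - ε) * T) ^ 2
            + 2 * (t + ‖c - P‖) * Real.sqrt (M ε) + M ε := by
        intro ε hε1 hε2
        obtain ⟨Z, hZX, hZd⟩ := con ε hε1 hε2
        set D := d + (1 - ε) * T with hD
        have h00 : (0:ℝ) ≤ (1 - ε) * T := mul_nonneg (by linarith) hT0.le
        have hD0 : (0:ℝ) ≤ D := by rw [hD]; linarith
        have hZp : D ≤ ‖Z - P‖ := by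
          calc D ≤ Metric.infDist Z C := hZd
            _ ≤ dist Z P := Metric.infDist_le_dist_of_mem hpC
            _ = ‖Z - P‖ := dist_eq_norm _ _
        have hZXn : ‖Z - X‖ ≤ T := by rw [← dist_eq_norm]; exact hZX
        have hZX2 : ‖Z - X‖ ^ 2 ≤ T ^ 2 := pow_le_pow_left₀ (norm_nonneg _) hZXn 2
        have e1 : ‖Z - P‖ ^ 2 = ‖Z - X‖ ^ 2 + 2 * d * (inner ℝ (Z - X) u : ℝ) + d ^ 2 := by
          have h1 : Z - P = (Z - X) + d • u := by rw [← hXu]; abel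
          rw [h1, norm_add_sq_real, real_inner_smul_right, norm_smul, Real.norm_eq_abs,
            abs_of_pos hdpos, hunorm, mul_one]
          ring
        have h2 : D ^ 2 - T ^ 2 - d ^ 2 ≤ 2 * d * (inner ℝ (Z - X) u : ℝ) := by
          have hZp2 : D ^ 2 ≤ ‖Z - P‖ ^ 2 := pow_le_pow_left₀ hD0 hZp 2
          linarith
        have e2 : ‖Z - xt‖ ^ 2 = ‖Z - X‖ ^ 2 - 2 * T * (inner ℝ (Z - X) u : ℝ) + T ^ 2 := by
          have h1 : Z - xt = (Z - X) - T • u := by rw [hxt]; abel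
          rw [h1, norm_sub_sq_real, real_inner_smul_right, norm_smul, Real.norm_eq_abs,
            abs_of_pos hT0, hunorm, mul_one]
          ring
        have h2T : T * (D ^ 2 - T ^ 2 - d ^ 2) ≤ T * (2 * d * (inner ℝ (Z - X) u : ℝ)) :=
          mul_le_mul_of_nonneg_left h2 hT0.le
        have h3 : T * (D ^ 2 - T ^ 2 - d ^ 2) / d ≤ 2 * T * (inner ℝ (Z - X) u : ℝ) := by
          rw [div_le_iff₀ hdpos]
          calc T * (D ^ 2 - T ^ 2 - d ^ 2) ≤ T * (2 * d * (inner ℝ (Z - X) u : ℝ)) := h2T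
            _ = 2 * T * (inner ℝ (Z - X) u : ℝ) * d := by ring
        have hMeq : 2 * T ^ 2 - T * (D ^ 2 - T ^ 2 - d ^ 2) / d = M ε := by
          rw [hM, hD]
          field_simp
          ring
        have e2d : d * ‖Z - xt‖ ^ 2
            = d * ‖Z - X‖ ^ 2 - d * (2 * T * (inner ℝ (Z - X) u : ℝ)) + d * T ^ 2 := by
          rw [e2]; ring
        have hZXd : d * ‖Z - X‖ ^ 2 ≤ d * T ^ 2 := mul_le_mul_of_nonneg_left hZX2 hd0
        have hdiv : d * (2 * T ^ 2 - T * (D ^ 2 - T ^ 2 - d ^ 2) / d)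
            = 2 * T ^ 2 * d - T * (D ^ 2 - T ^ 2 - d ^ 2) := by
          field_simp
        have h4 : d * ‖Z - xt‖ ^ 2 ≤ d * (2 * T ^ 2 - T * (D ^ 2 - T ^ 2 - d ^ 2) / d) := by
          rw [hdiv]; linarith [e2d, h2T, hZXd]
        have hMle : ‖Z - xt‖ ^ 2 ≤ M ε := by
          rw [← hMeq]
          exact le_of_mul_le_mul_left h4 hdpos
        have hM0 : 0 ≤ M ε := le_trans (sq_nonneg _) hMle
        have hZxt : ‖Z - xt‖ ≤ Real.sqrt (M ε) := by
          calc ‖Z - xt‖ = Real.sqrt (‖Z - xt‖ ^ 2) := (Real.sqrt_sq (norm_nonneg _)).symm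
            _ ≤ Real.sqrt (M ε) := Real.sqrt_le_sqrt hMle
        have hDc : D ≤ ‖Z - c‖ := by
          calc D ≤ Metric.infDist Z C := hZd
            _ ≤ dist Z c := Metric.infDist_le_dist_of_mem hc
            _ = ‖Z - c‖ := dist_eq_norm _ _
        have htri : ‖Z - c‖ ≤ ‖xt - c‖ + ‖Z - xt‖ := by
          have h1 : Z - c = (Z - xt) + (xt - c) := by module
          calc ‖Z - c‖ = ‖(Z - xt) + (xt - c)‖ := by rw [← h1]
            _ ≤ ‖Z - xt‖ + ‖xt - c‖ := norm_add_le _ _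
            _ = ‖xt - c‖ + ‖Z - xt‖ := by ring
        have hB : ‖xt - c‖ ≤ t + ‖c - P‖ := by
          have h1 : xt - c = (xt - P) - (c - P) := by module
          calc ‖xt - c‖ = ‖(xt - P) - (c - P)‖ := by rw [← h1]
            _ ≤ ‖xt - P‖ + ‖c - P‖ := norm_sub_le _ _
            _ = t + ‖c - P‖ := by rw [hxtnorm]
        have e3 : ‖xt - c‖ ^ 2 = t ^ 2 - 2 * t * (inner ℝ u (c - P) : ℝ) + ‖c - P‖ ^ 2 := by
          have h1 : xt - c = t • u - (c - P) := by rw [← hxtP]; abel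
          rw [h1, norm_sub_sq_real, real_inner_smul_left, norm_smul, Real.norm_eq_abs,
            abs_of_pos (by linarith : (0:ℝ) < t), hunorm, mul_one]
          ring
        have l1 : D ≤ ‖xt - c‖ + Real.sqrt (M ε) := by linarith
        have l2 : D ^ 2 ≤ (‖xt - c‖ + Real.sqrt (M ε)) ^ 2 := pow_le_pow_left₀ hD0 l1 2
        have l3 : (‖xt - c‖ + Real.sqrt (M ε)) ^ 2
            = ‖xt - c‖ ^ 2 + 2 * Real.sqrt (M ε) * ‖xt - c‖ + M ε := by
          rw [add_sq, Real.sq_sqrt hM0]; ring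
        have l4 : 2 * Real.sqrt (M ε) * ‖xt - c‖ ≤ 2 * Real.sqrt (M ε) * (t + ‖c - P‖) :=
          mul_le_mul_of_nonneg_left hB (by positivity)
        linarith [l2, l3, l4, e3]
      have hM00 : M 0 = 0 := by rw [hM]; ring
      have hval : t ^ 2 + ‖c - P‖ ^ 2 - (d + (1 - 0) * T) ^ 2
            + 2 * (t + ‖c - P‖) * Real.sqrt (M 0) + M 0 = ‖c - P‖ ^ 2 := by
        rw [hM00, Real.sqrt_zero, hTdef]; ring
      have hcM : Continuous M := by
        rw [hM]
        fun_prop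
      have hsqM : Continuous (fun ε : ℝ => Real.sqrt (M ε)) := Real.continuous_sqrt.comp hcM
      have hc1 : Continuous (fun ε : ℝ => t ^ 2 + ‖c - P‖ ^ 2 - (d + (1 - ε) * T) ^ 2
            + 2 * (t + ‖c - P‖) * Real.sqrt (M ε) + M ε) := by
        refine ((Continuous.sub ?_ ?_).add (continuous_const.mul hsqM)).add hcM
        · exact continuous_const
        · exact ((continuous_const.add ((continuous_const.sub continuous_id).mul
            continuous_const)).pow 2)
      have hF : Tendsto (fun ε : ℝ => t ^ 2 + ‖c - P‖ ^ 2 - (d + (1 - ε) * T) ^ 2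
            + 2 * (t + ‖c - P‖) * Real.sqrt (M ε) + M ε) (𝓝[>] 0) (𝓝 (‖c - P‖ ^ 2)) := by
        have h1 := (hc1.tendsto 0).mono_left (nhdsWithin_le_nhds (s := Ioi (0:ℝ)))
        rwa [hval] at h1
      refine ge_of_tendsto hF ?_
      filter_upwards [Ioc_mem_nhdsGT_of_mem (⟨le_rfl, one_half_pos⟩ : (0:ℝ) ∈ Ico 0 (1/2))]
        with ε hε
      exact perε ε hε.1 hε.2
    have hlim : 2 * δ * (inner ℝ u (c - P) : ℝ) ≤ ‖c - P‖ ^ 2 := by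
      have hcont : Continuous (fun s : ℝ => 2 * s * (inner ℝ u (c - P) : ℝ)) := by fun_prop
      have hT : Tendsto (fun s : ℝ => 2 * s * (inner ℝ u (c - P) : ℝ)) (𝓝[<] δ)
          (𝓝 (2 * δ * (inner ℝ u (c - P) : ℝ))) := (hcont.tendsto δ).mono_left nhdsWithin_le_nhds
      refine le_of_tendsto hT ?_
      filter_upwards [Ioo_mem_nhdsLT_of_mem (⟨hX, le_rfl⟩ : δ ∈ Ioc d δ)] with s hs
      exact key s hs.1 hs.2
    calc 2 * δ * (inner ℝ (X - P) (c - P) : ℝ) = d * (2 * δ * (inner ℝ u (c - P) : ℝ)) := by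
          rw [hXu, real_inner_smul_left]; ring
      _ ≤ d * ‖c - P‖ ^ 2 := mul_le_mul_of_nonneg_left hlim hd0

end Aux

/-- Lipschitz continuity of the metric projection onto a `δ`-proximally smooth closed set:
if the projection is single-valued within distance `δ` of `C`, then for `γ ∈ (0, δ)` and
points within distance `γ` of `C`, `‖Proj_C(X) - Proj_C(Y)‖ ≤ (δ/(δ-γ))‖X - Y‖`. -/
theorem stmt_10 (n p : ℕ) (C : Set (EuclideanSpace ℝ (Fin n × Fin p)))
    (hC : IsClosed C) (hCne : C.Nonempty) (δ : ℝ) (hδ : 0 < δ)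
    (proj : EuclideanSpace ℝ (Fin n × Fin p) → EuclideanSpace ℝ (Fin n × Fin p))
    (hproj : ∀ X, Metric.infDist X C < δ →
      proj X ∈ C ∧ ‖X - proj X‖ = Metric.infDist X C)
    (huniq : ∀ X, Metric.infDist X C < δ →
      ∀ Y ∈ C, ‖X - Y‖ = Metric.infDist X C → Y = proj X)
    (γ : ℝ) (hγ : γ ∈ Set.Ioo 0 δ) :
    ∀ X Y, Metric.infDist X C < γ → Metric.infDist Y C < γ →
      ‖proj X - proj Y‖ ≤ (δ / (δ - γ)) * ‖X - Y‖ := by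
  intro X Y hX hY
  have hγδ : γ < δ := hγ.2
  have hδγ : 0 < δ - γ := sub_pos.mpr hγδ
  have hXδ : Metric.infDist X C < δ := hX.trans hγδ
  have hYδ : Metric.infDist Y C < δ := hY.trans hγδ
  set P := proj X
  set Q := proj Y
  have hQC : Q ∈ C := (hproj Y hYδ).1
  have hPC : P ∈ C := (hproj X hXδ).1
  have NI1 : 2 * δ * (inner ℝ (X - P) (Q - P) : ℝ) ≤ Metric.infDist X C * ‖Q - P‖ ^ 2 :=
    normal_ineq C hC hCne δ hδ proj hproj huniq X hXδ Q hQC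
  have NI2 : 2 * δ * (inner ℝ (Y - Q) (P - Q) : ℝ) ≤ Metric.infDist Y C * ‖P - Q‖ ^ 2 :=
    normal_ineq C hC hCne δ hδ proj hproj huniq Y hYδ P hPC
  set S := ‖P - Q‖ with hS
  have hSQ : ‖Q - P‖ = S := norm_sub_rev Q P
  -- inner product algebra
  have hsum : (inner ℝ (X - P) (Q - P) : ℝ) + (inner ℝ (Y - Q) (P - Q) : ℝ) = (inner ℝ (X - Y) (Q - P) : ℝ) + S ^ 2 := by
    have h1 : (inner ℝ (Y - Q) (P - Q) : ℝ) = (inner ℝ (Q - Y) (Q - P) : ℝ) := by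
      rw [← inner_neg_neg (𝕜 := ℝ)]
      congr 1 <;> module
    have h2 : (inner ℝ (X - P) (Q - P) : ℝ) + (inner ℝ (Q - Y) (Q - P) : ℝ) = (inner ℝ ((X - Y) + (Q - P)) (Q - P) : ℝ) := by
      rw [← inner_add_left]
      congr 1
      module
    have h3 : (inner ℝ ((X - Y) + (Q - P)) (Q - P) : ℝ) = (inner ℝ (X - Y) (Q - P) : ℝ) + (inner ℝ (Q - P) (Q - P) : ℝ) := by
      rw [inner_add_left]
    have h4 : (inner ℝ (Q - P) (Q - P) : ℝ) = S ^ 2 := by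
      rw [real_inner_self_eq_norm_sq, hSQ]
    rw [h1, h2, h3, h4]
  have hdsum : Metric.infDist X C + Metric.infDist Y C ≤ 2 * γ := by linarith
  have hkey : (δ - γ) * S ^ 2 ≤ δ * (‖X - Y‖ * S) := by
    have hCS : (inner ℝ (X - Y) (P - Q) : ℝ) ≤ ‖X - Y‖ * S := by
      calc (inner ℝ (X - Y) (P - Q) : ℝ) ≤ ‖X - Y‖ * ‖P - Q‖ := real_inner_le_norm _ _
        _ = ‖X - Y‖ * S := by rw [hS]
    have hflip : (inner ℝ (X - Y) (Q - P) : ℝ) = - (inner ℝ (X - Y) (P - Q) : ℝ) := by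
      rw [← inner_neg_right]
      congr 1
      module
    have hS2 : (0:ℝ) ≤ S ^ 2 := sq_nonneg S
    have hd1 : (0:ℝ) ≤ Metric.infDist X C := Metric.infDist_nonneg
    have hd2 : (0:ℝ) ≤ Metric.infDist Y C := Metric.infDist_nonneg
    rw [hSQ] at NI1
    have hmul1 : (2 * δ) * ((inner ℝ (X - Y) (P - Q) : ℝ)) ≤ (2 * δ) * (‖X - Y‖ * S) :=
      mul_le_mul_of_nonneg_left hCS (by linarith)
    have hmul2 : (Metric.infDist X C + Metric.infDist Y C) * S ^ 2 ≤ 2 * γ * S ^ 2 :=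
      mul_le_mul_of_nonneg_right hdsum hS2
    nlinarith [NI1, NI2, hsum, hflip, hmul1, hmul2]
  have hSnn : (0 : ℝ) ≤ S := norm_nonneg _
  rcases eq_or_lt_of_le hSnn with h0 | hSpos
  · rw [← h0]
    positivity
  · rw [div_mul_eq_mul_div, le_div_iff₀ hδγ]
    have := le_of_mul_le_mul_right (by nlinarith [hkey] : ((δ - γ) * S) * S ≤ (δ * ‖X - Y‖) * S) hSpos
    linarith
end

section
/- The Stiefel manifold St(n, p) = {X ∈ ℝ^{n×p} : XᵀX = I_p} is 1-proximally smooth: for any X ∈ ℝ^{n×p} with dist(X, St(n,p)) < 1, the nearest point in St(n, p) to X is unique. -/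
open Matrix

/-- Equip matrix spaces with the Frobenius norm. -/
noncomputable local instance frobInst (n p : ℕ) :
    NormedAddCommGroup (Matrix (Fin n) (Fin p) ℝ) :=
  Matrix.frobeniusNormedAddCommGroup

lemma frobSq {n p : ℕ} (M : Matrix (Fin n) (Fin p) ℝ) : ‖M‖ ^ 2 = ∑ i, ∑ j, (M i j)^2 := by
  have hs : (0:ℝ) ≤ ∑ i, ∑ j, ‖M i j‖ ^ (2:ℝ) := by positivity
  rw [frobenius_norm_def, ← Real.rpow_natCast (_ ^ (1/2:ℝ)) 2, ← Real.rpow_mul hs]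
  norm_num

lemma normsq_trace {n p : ℕ} (M : Matrix (Fin n) (Fin p) ℝ) :
    ‖M‖ ^ 2 = Matrix.trace (Mᵀ * M) := by
  rw [frobSq]
  simp [Matrix.trace, Matrix.mul_apply, Matrix.diag, pow_two]
  exact Finset.sum_comm

lemma mulVecBound {n p : ℕ} (M : Matrix (Fin n) (Fin p) ℝ) (v : Fin p → ℝ) :
    (M *ᵥ v) ⬝ᵥ (M *ᵥ v) ≤ ‖M‖^2 * (v ⬝ᵥ v) := by
  rw [frobSq]
  have hrow : ∀ i, ((M *ᵥ v) i) * ((M *ᵥ v) i) ≤ (∑ j, (M i j)^2) * (∑ j, (v j)^2) := by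
    intro i
    have := Finset.sum_mul_sq_le_sq_mul_sq Finset.univ (fun j => M i j) v
    simpa [Matrix.mulVec, dotProduct, pow_two] using this
  calc (M *ᵥ v) ⬝ᵥ (M *ᵥ v) = ∑ i, ((M *ᵥ v) i) * ((M *ᵥ v) i) := rfl
    _ ≤ ∑ i, (∑ j, (M i j)^2) * (∑ j, (v j)^2) := Finset.sum_le_sum fun i _ => hrow i
    _ = (∑ i, ∑ j, (M i j)^2) * (v ⬝ᵥ v) := by
        rw [← Finset.sum_mul]; congr 1; simp [dotProduct, pow_two]

lemma herm_transpose {p : ℕ} {M : Matrix (Fin p) (Fin p) ℝ} (h : M.IsHermitian) : Mᵀ = M := by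
  have := h.eq
  rwa [show Mᴴ = Mᵀ from Matrix.ext fun i j => by simp [Matrix.conjTranspose_apply]] at this

open scoped MatrixOrder in
noncomputable def Matrix.PosSemidef.sqrt {p : ℕ} {A : Matrix (Fin p) (Fin p) ℝ}
    (_ : A.PosSemidef) : Matrix (Fin p) (Fin p) ℝ := CFC.sqrt A

open scoped MatrixOrder in
lemma Matrix.PosSemidef.posSemidef_sqrt {p : ℕ} {A : Matrix (Fin p) (Fin p) ℝ}
    (hA : A.PosSemidef) : hA.sqrt.PosSemidef := (CFC.sqrt_nonneg A).posSemidef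

open scoped MatrixOrder in
lemma Matrix.PosSemidef.sqrt_mul_self {p : ℕ} {A : Matrix (Fin p) (Fin p) ℝ}
    (hA : A.PosSemidef) : hA.sqrt * hA.sqrt = A := CFC.sqrt_mul_sqrt_self A hA.nonneg

lemma sqrt_posDef {p : ℕ} {A : Matrix (Fin p) (Fin p) ℝ} (hA : A.PosDef) :
    hA.posSemidef.sqrt.PosDef := by
  have hS := hA.posSemidef.posSemidef_sqrt
  refine Matrix.PosDef.of_dotProduct_mulVec_pos hS.1 fun x hx => ?_
  rcases (hS.dotProduct_mulVec_nonneg x).lt_or_eq with h | h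
  · exact h
  · exfalso
    have h0 : hA.posSemidef.sqrt *ᵥ x = 0 := (hS.dotProduct_mulVec_zero_iff x).mp h.symm
    have hAx : A *ᵥ x = 0 := by
      rw [← hA.posSemidef.sqrt_mul_self, ← Matrix.mulVec_mulVec, h0, Matrix.mulVec_zero]
    have := hA.dotProduct_mulVec_pos hx
    rw [hAx, dotProduct_zero] at this
    exact lt_irrefl 0 this

lemma dp_self_nonneg {p : ℕ} (v : Fin p → ℝ) : 0 ≤ v ⬝ᵥ v :=
  Finset.sum_nonneg fun i _ => mul_self_nonneg _

lemma trace_expand {n p : ℕ} (U V : Matrix (Fin n) (Fin p) ℝ) :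
    Matrix.trace ((U - V)ᵀ * (U - V)) =
      Matrix.trace (Uᵀ * U) - Matrix.trace (Uᵀ * V) - Matrix.trace (Vᵀ * U)
        + Matrix.trace (Vᵀ * V) := by
  simp [Matrix.transpose_sub, Matrix.sub_mul, Matrix.mul_sub, Matrix.trace_sub, Matrix.trace_add]
  ring

/-- The Stiefel manifold `St(n,p) = {X : XᵀX = I}` is `1`-proximally smooth with respect to
the Frobenius norm: any `X` with `dist(X, St(n,p)) < 1` has a unique nearest point in
`St(n,p)`. -/
theorem stmt_11 (n p : ℕ) (hpn : p ≤ n)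
    (X : Matrix (Fin n) (Fin p) ℝ)
    (hX : Metric.infDist X {Y : Matrix (Fin n) (Fin p) ℝ | Yᵀ * Y = 1} < 1) :
    ∃! Y : Matrix (Fin n) (Fin p) ℝ,
      Y ∈ {Y : Matrix (Fin n) (Fin p) ℝ | Yᵀ * Y = 1} ∧
      dist X Y = Metric.infDist X {Y : Matrix (Fin n) (Fin p) ℝ | Yᵀ * Y = 1} := by
  set S : Set (Matrix (Fin n) (Fin p) ℝ) := {Y | Yᵀ * Y = 1} with hSdef
  -- S is nonempty
  have hY0 : (Matrix.of fun i j => if i = Fin.castLE hpn j then (1:ℝ) else 0) ∈ S := by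
    show _ = _
    ext j k
    simp [Matrix.mul_apply, Matrix.one_apply, ite_and, Fin.castLE_inj]
    simp [eq_comm]
  have hne : S.Nonempty := ⟨_, hY0⟩
  -- extract a close point Z
  obtain ⟨Z, hZS, hZd⟩ := (Metric.infDist_lt_iff hne).mp hX
  have hZS' : Zᵀ * Z = 1 := hZS
  have hZn : ‖X - Z‖ < 1 := by rwa [dist_eq_norm] at hZd
  -- A = XᵀX is positive definite
  have hA : (Xᵀ * X).PosDef := by
    refine Matrix.PosDef.of_dotProduct_mulVec_pos ?_ ?_
    · show _ = _
      rw [show (Xᵀ * X)ᴴ = (Xᵀ * X)ᵀ from Matrix.ext fun i j => by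
        simp [Matrix.conjTranspose_apply, Matrix.transpose_apply]]
      rw [Matrix.transpose_mul, Matrix.transpose_transpose]
    · intro v hv
      have hstar : star v = v := funext fun i => rfl
      rw [hstar, ← Matrix.mulVec_mulVec, Matrix.dotProduct_mulVec, Matrix.vecMul_transpose]
      -- goal : 0 < (X *ᵥ v) ⬝ᵥ (X *ᵥ v)
      have hXv : X *ᵥ v ≠ 0 := by
        intro h0
        have hZv : Z *ᵥ v = (Z - X) *ᵥ v := by
          rw [Matrix.sub_mulVec, h0, sub_zero]
        have h1 : (Z *ᵥ v) ⬝ᵥ (Z *ᵥ v) = v ⬝ᵥ v := by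
          rw [show (Z *ᵥ v) ⬝ᵥ (Z *ᵥ v) = v ⬝ᵥ ((Zᵀ * Z) *ᵥ v) from
            (by rw [← Matrix.mulVec_mulVec, Matrix.dotProduct_mulVec, Matrix.vecMul_transpose] :
              v ⬝ᵥ ((Zᵀ * Z) *ᵥ v) = (Z *ᵥ v) ⬝ᵥ (Z *ᵥ v)).symm,
            hZS', Matrix.one_mulVec]
        have h2 : ((Z - X) *ᵥ v) ⬝ᵥ ((Z - X) *ᵥ v) ≤ ‖Z - X‖^2 * (v ⬝ᵥ v) :=
          mulVecBound _ _
        have hvpos : 0 < v ⬝ᵥ v := by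
          rcases (dp_self_nonneg v ).lt_or_eq with h | h
          · exact h
          · exact absurd (dotProduct_self_eq_zero.mp h.symm) hv
        have hnn : ‖Z - X‖^2 < 1 := by
          have h0 : (0:ℝ) ≤ ‖Z - X‖ := norm_nonneg _
          have : ‖Z - X‖ < 1 := by rwa [norm_sub_rev]
          nlinarith
        nlinarith [h1, h2, hZv ▸ h1]
      rcases (dp_self_nonneg (X *ᵥ v)).lt_or_eq with h | h
      · exact h
      · exact absurd (dotProduct_self_eq_zero.mp h.symm) hXv
    -- square roots
  have hAs := hA.posSemidef
  set S1 := hAs.sqrt with hS1def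
  have hS1pd : S1.PosDef := sqrt_posDef hA
  have hS1mul : S1 * S1 = Xᵀ * X := hAs.sqrt_mul_self
  have hS1t : S1ᵀ = S1 := herm_transpose hS1pd.1
  have hS1unit : IsUnit S1.det := hS1pd.det_pos.ne'.isUnit
  have hS1inv : S1⁻¹ * S1 = 1 := Matrix.nonsing_inv_mul _ hS1unit
  have hS1inv' : S1 * S1⁻¹ = 1 := Matrix.mul_nonsing_inv _ hS1unit
  set B := hS1pd.posSemidef.sqrt with hBdef
  have hBpd : B.PosDef := sqrt_posDef hS1pd
  have hBmul : B * B = S1 := hS1pd.posSemidef.sqrt_mul_self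
  have hBt : Bᵀ = B := herm_transpose hBpd.1
  have hBunit : IsUnit B.det := hBpd.det_pos.ne'.isUnit
  set P := X * S1⁻¹ with hPdef
  have hPX : P * S1 = X := by rw [hPdef, Matrix.mul_assoc, hS1inv, Matrix.mul_one]
  have hPt : Pᵀ = S1⁻¹ * Xᵀ := by
    rw [hPdef, Matrix.transpose_mul, Matrix.transpose_nonsing_inv, hS1t]
  have hPS : Pᵀ * P = 1 := by
    rw [hPt, hPdef]
    have h : Xᵀ * (X * S1⁻¹) = S1 * (S1 * S1⁻¹) := by
      rw [← Matrix.mul_assoc, ← hS1mul, Matrix.mul_assoc]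
    rw [Matrix.mul_assoc, h, hS1inv', Matrix.mul_one, hS1inv]
  have hXt : Xᵀ = S1 * Pᵀ := by rw [← hPX, Matrix.transpose_mul, hS1t]
  have hPmem : P ∈ S := hPS
  -- the key identity
  have key : ∀ Y : Matrix (Fin n) (Fin p) ℝ, Yᵀ * Y = 1 →
      ‖X - Y‖ ^ 2 = ‖X - P‖ ^ 2 + ‖(Y - P) * B‖ ^ 2 := by
    intro Y hY
    rw [normsq_trace, normsq_trace, normsq_trace]
    have f5 : Matrix.trace (Xᵀ * P) = Matrix.trace S1 := by
      rw [hXt, Matrix.mul_assoc, hPS, Matrix.mul_one]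
    have f6 : Matrix.trace (Pᵀ * X) = Matrix.trace S1 := by
      rw [← hPX, ← Matrix.mul_assoc, hPS, Matrix.one_mul]
    have e3 : ((Y - P) * B)ᵀ * ((Y - P) * B) = B * ((Y - P)ᵀ * (Y - P)) * B := by
      rw [Matrix.transpose_mul, hBt]
      simp only [Matrix.mul_assoc]
    have e4 : Matrix.trace (((Y - P) * B)ᵀ * ((Y - P) * B))
        = Matrix.trace (((Y - P)ᵀ * (Y - P)) * S1) := by
      rw [e3, Matrix.trace_mul_comm, ← Matrix.mul_assoc, hBmul, Matrix.trace_mul_comm]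
    have g4 : Matrix.trace ((Pᵀ * Y) * S1) = Matrix.trace (Xᵀ * Y) := by
      rw [Matrix.trace_mul_comm, ← Matrix.mul_assoc, ← hXt]
    have g3 : Matrix.trace ((Yᵀ * P) * S1) = Matrix.trace (Yᵀ * X) := by
      rw [Matrix.mul_assoc, hPX]
    have e5 : Matrix.trace (((Y - P)ᵀ * (Y - P)) * S1)
        = Matrix.trace S1 - Matrix.trace (Yᵀ * X) - Matrix.trace (Xᵀ * Y)
          + Matrix.trace S1 := by
      simp only [Matrix.transpose_sub, Matrix.sub_mul, Matrix.mul_sub, Matrix.trace_sub,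
        Matrix.trace_add]
      rw [hY, hPS, g3, g4]
      simp only [Matrix.one_mul]
      ring
    rw [trace_expand X Y, trace_expand X P, e4, e5, hY, hPS, f5, f6]
    ring
  -- P is the nearest point
  have hle : ∀ Y ∈ S, ‖X - P‖ ≤ ‖X - Y‖ := by
    intro Y hY
    have k := key Y hY
    have h2 : ‖X - P‖ ^ 2 ≤ ‖X - Y‖ ^ 2 := by nlinarith [sq_nonneg ‖(Y - P) * B‖]
    exact (pow_le_pow_iff_left₀ (norm_nonneg _) (norm_nonneg _) two_ne_zero).mp h2
  have hdistP : dist X P = Metric.infDist X S := by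
    refine le_antisymm ?_ (Metric.infDist_le_dist_of_mem hPmem)
    by_contra h
    push_neg at h
    obtain ⟨Y, hY, hlt⟩ := (Metric.infDist_lt_iff hne).mp h
    have h2 := hle Y hY
    rw [dist_eq_norm, dist_eq_norm] at hlt
    linarith
  refine ⟨P, ⟨hPmem, hdistP⟩, ?_⟩
  rintro Y ⟨hYS, hYd⟩
  have hYP : ‖X - Y‖ = ‖X - P‖ := by
    rw [← dist_eq_norm, ← dist_eq_norm, hYd, hdistP]
  have k := key Y hYS
  have hz : ‖(Y - P) * B‖ ^ 2 = 0 := by rw [hYP] at k; linarith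
  have h0 : (Y - P) * B = 0 :=
    norm_eq_zero.mp (pow_eq_zero_iff two_ne_zero |>.mp hz)
  have hsub : Y - P = 0 := by
    have h1 := congrArg (fun M => M * B⁻¹) h0
    simpa [Matrix.mul_assoc, Matrix.mul_nonsing_inv _ hBunit] using h1
  exact sub_eq_zero.mp hsub
end
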